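/- Let d ≥ 2 and D > 0. With C_+ = C_+(λ) = arctan((cos√(dλ) - e^D)/sin√(dλ)) for λ ∈ (0, π²/d), one has lim_{λ → 0⁺} (sin(C_+ + √(dλ)) + 1)/(sin(C_+) + 1) = e^{2D}. -/
import Mathlib


open Real Set

lemma stmt_11_key (E t : ℝ) (hE : 1 < E) (ht0 : 0 < t) (htpi : t < π) :
    (Real.sin (Real.arctan ((Real.cos t - E) / Real.sin t) + t) + 1) /
      (Real.sin (Real.arctan ((Real.cos t - E) / Real.sin t)) + 1)
      = ((1 + E) * Real.sqrt (1 - 2 * E * Real.cos t + E ^ 2) + 1 + E ^ 2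
          + E * (1 - Real.cos t)) / (1 + Real.cos t) := by
  have hst : 0 < Real.sin t := Real.sin_pos_of_pos_of_lt_pi ht0 htpi
  set c := Real.cos t with hc
  set st := Real.sin t with hstdef
  have hpyth : st ^ 2 + c ^ 2 = 1 := by
    simp [hstdef, hc, Real.sin_sq_add_cos_sq]
  have hc1 : c < 1 := by nlinarith
  have hc2 : -1 < c := by nlinarith
  have hQnn : (0:ℝ) ≤ 1 - 2 * E * c + E ^ 2 := by nlinarith [sq_nonneg (E - c)]
  set R := Real.sqrt (1 - 2 * E * c + E ^ 2) with hR
  have hRnn : 0 ≤ R := Real.sqrt_nonneg _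
  have hRsq : R ^ 2 = 1 - 2 * E * c + E ^ 2 := Real.sq_sqrt hQnn
  have hRgt : E - c < R := by nlinarith
  have hRpos : 0 < R := by nlinarith
  set u := (c - E) / st with hu
  have hS : Real.sqrt (1 + u ^ 2) = R / st := by
    have h1 : 1 + u ^ 2 = (1 - 2 * E * c + E ^ 2) / st ^ 2 := by
      rw [hu]; field_simp; nlinarith
    rw [h1, Real.sqrt_div hQnn, Real.sqrt_sq hst.le]
  rw [Real.sin_add, Real.sin_arctan, Real.cos_arctan, hS]
  have hnum : u / (R / st) * c + 1 / (R / st) * st + 1 = (1 - E * c + R) / R := by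
    rw [hu]; field_simp; nlinarith
  have hden : u / (R / st) + 1 = (c - E + R) / R := by
    rw [hu]; field_simp
  rw [hnum, hden]
  have h3 : (1 - E * c + R) / R / ((c - E + R) / R) = (1 - E * c + R) / (c - E + R) := by
    rw [div_div_div_eq, mul_comm R (c - E + R), mul_div_mul_right _ _ hRpos.ne']
  rw [h3]
  have hd1 : (0:ℝ) < c - E + R := by linarith
  have hd2 : (0:ℝ) < 1 + c := by linarith
  rw [div_eq_div_iff (by positivity) (by positivity)]
  linear_combination (-1 - E) * hRsq

theorem stmt_11 (d : ℕ) (hd : 2 ≤ d) (D : ℝ) (hD : 0 < D) :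
    Filter.Tendsto
      (fun lam : ℝ =>
        (Real.sin (Real.arctan ((Real.cos (Real.sqrt (d * lam)) - Real.exp D) /
            Real.sin (Real.sqrt (d * lam))) + Real.sqrt (d * lam)) + 1) /
        (Real.sin (Real.arctan ((Real.cos (Real.sqrt (d * lam)) - Real.exp D) /
            Real.sin (Real.sqrt (d * lam)))) + 1))
      (nhdsWithin 0 (Set.Ioi 0)) (nhds (Real.exp (2 * D))) := by
  set E := Real.exp D with hE
  have hE1 : 1 < E := by
    rw [hE, show (1:ℝ) = Real.exp 0 from (Real.exp_zero).symm]
    exact Real.exp_lt_exp.mpr hD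
  set g : ℝ → ℝ := fun t =>
    ((1 + E) * Real.sqrt (1 - 2 * E * Real.cos t + E ^ 2) + 1 + E ^ 2
      + E * (1 - Real.cos t)) / (1 + Real.cos t) with hg
  have hg0 : g 0 = Real.exp (2 * D) := by
    have hexp : Real.exp (2 * D) = E ^ 2 := by
      rw [hE, two_mul, Real.exp_add]; ring
    rw [hg]
    simp only [Real.cos_zero]
    rw [show (1:ℝ) - 2 * E * 1 + E ^ 2 = (E - 1) ^ 2 by ring,
      Real.sqrt_sq (by linarith), hexp]
    field_simp
    ring
  have hgcont : ContinuousAt g 0 := by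
    apply ContinuousAt.div
    · fun_prop
    · fun_prop
    · simp only [Real.cos_zero]
      norm_num
  have hsqrt_tendsto : Filter.Tendsto (fun lam : ℝ => Real.sqrt (d * lam))
      (nhdsWithin 0 (Set.Ioi 0)) (nhds 0) := by
    have : Filter.Tendsto (fun lam : ℝ => Real.sqrt (d * lam)) (nhds 0) (nhds 0) := by
      have : ContinuousAt (fun lam : ℝ => Real.sqrt (d * lam)) 0 := by fun_prop
      simpa using this.tendsto
    exact this.mono_left nhdsWithin_le_nhds
  have hgcomp : Filter.Tendsto (fun lam : ℝ => g (Real.sqrt (d * lam)))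
      (nhdsWithin 0 (Set.Ioi 0)) (nhds (Real.exp (2 * D))) := by
    rw [← hg0]
    exact (hgcont.tendsto).comp hsqrt_tendsto
  apply hgcomp.congr'
  have hmem : Set.Ioo (0:ℝ) (π ^ 2 / d) ∈ nhdsWithin (0:ℝ) (Set.Ioi 0) := by
    exact Ioo_mem_nhdsGT_of_mem ⟨le_refl 0, by positivity⟩
  filter_upwards [hmem] with lam hlam
  have hd0 : (0:ℝ) < d := by positivity
  have hdl : 0 < (d:ℝ) * lam := by
    have := hlam.1; positivity
  have ht0 : 0 < Real.sqrt (d * lam) := Real.sqrt_pos.mpr hdl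
  have htpi : Real.sqrt (d * lam) < π := by
    have h1 : (d:ℝ) * lam < π ^ 2 := by
      have := hlam.2
      calc (d:ℝ) * lam < d * (π ^ 2 / d) := by
            exact mul_lt_mul_of_pos_left this hd0
        _ = π ^ 2 := by field_simp
    calc Real.sqrt (d * lam) < Real.sqrt (π ^ 2) := by
          exact Real.sqrt_lt_sqrt hdl.le h1
      _ = π := Real.sqrt_sq Real.pi_pos.le
  exact (stmt_11_key E (Real.sqrt (d * lam)) hE1 ht0 htpi).symm
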